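/- arXiv:1407.3694 — 2 statements merged into one kernel-verified Lean document; each statement's English description precedes it below -/
import Mathlib

section
/- Let f(x) = (log(x+e))^a − 1 and g(x) = (log(x+e))^b − 1 with 0 < a² < b < a < 1, and let h(W) = e^{C₁W}(C₂+K) for positive constants C₁, C₂, K. Then for any c ∈ (0,1), the limit as x → ∞ of f'(f⁻¹(g((1−c)x))) · h(f((1+c)x)) equals 0. -/
open Filter Real


/-- Let `f x = (log(x+e))^a − 1`, `g x = (log(x+e))^b − 1` with `0 < a² < b < a < 1`, and
`h W = e^{C₁W}(C₂+K)` with `C₁, C₂, K > 0`. Then for any `c ∈ (0,1)`,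
`f'(f⁻¹(g((1−c)x))) · h(f((1+c)x)) → 0` as `x → ∞`. -/
theorem stmt3 (a b c C₁ C₂ K : ℝ)
    (ha0 : 0 < a) (hab : a ^ 2 < b) (hba : b < a) (ha1 : a < 1)
    (hC₁ : 0 < C₁) (hC₂ : 0 < C₂) (hK : 0 < K)
    (hc0 : 0 < c) (hc1 : c < 1)
    (f g h f' finv : ℝ → ℝ)
    (hf : ∀ x, f x = (Real.log (x + Real.exp 1)) ^ a - 1)
    (hg : ∀ x, g x = (Real.log (x + Real.exp 1)) ^ b - 1)
    (hh : ∀ W, h W = Real.exp (C₁ * W) * (C₂ + K))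
    (hf' : ∀ x, f' x = a * (Real.log (x + Real.exp 1)) ^ (a - 1) / (x + Real.exp 1))
    (hfinv : ∀ y, finv y = Real.exp ((y + 1) ^ (1 / a)) - Real.exp 1) :
    Filter.Tendsto (fun x : ℝ => f' (finv (g ((1 - c) * x))) * h (f ((1 + c) * x)))
      Filter.atTop (nhds 0) := by
  have hc1' : (0:ℝ) < 1 - c := by linarith
  have hc2' : (0:ℝ) < 1 + c := by linarith
  have hE1 : (1:ℝ) ≤ Real.exp 1 := by linarith [Real.add_one_le_exp 1]
  set ℓ : ℝ → ℝ := fun x => Real.log ((1 - c) * x + Real.exp 1) with hℓdef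
  set m : ℝ → ℝ := fun x => Real.log ((1 + c) * x + Real.exp 1) with hmdef
  have hℓ : Tendsto ℓ atTop atTop := by
    apply Real.tendsto_log_atTop.comp
    exact tendsto_atTop_add_const_right _ _ (Filter.Tendsto.const_mul_atTop hc1' tendsto_id)
  have hm : Tendsto m atTop atTop := by
    apply Real.tendsto_log_atTop.comp
    exact tendsto_atTop_add_const_right _ _ (Filter.Tendsto.const_mul_atTop hc2' tendsto_id)
  set q := b / a with hq
  have hb0 : 0 < b := by nlinarith
  have hq0 : 0 < q := div_pos hb0 ha0
  have hqa : a < q := by rw [hq, lt_div_iff₀ ha0]; nlinarith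
  have hqneg : q * (a - 1) ≤ 0 := by nlinarith
  -- eventual bound m ≤ 2 ℓ
  have hm2ℓ : ∀ᶠ x in atTop, m x ≤ 2 * ℓ x := by
    filter_upwards [eventually_ge_atTop ((1+c)/(1-c)^2), eventually_ge_atTop (0:ℝ)]
      with x hx hx0
    have h0 : (0:ℝ) < (1 + c) * x + Real.exp 1 := by nlinarith
    have hcx : (1+c) ≤ x * (1-c)^2 := (div_le_iff₀ (by positivity)).mp hx
    have h2 : (1 + c) * x + Real.exp 1 ≤ ((1 - c) * x + Real.exp 1)^2 := by
      nlinarith [mul_le_mul_of_nonneg_right hcx hx0, sq_nonneg ((1-c)*x),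
        mul_nonneg (mul_nonneg hc1'.le hx0) (Real.exp_pos 1).le,
        mul_le_mul_of_nonneg_left hE1 (Real.exp_pos 1).le]
    have := Real.log_le_log h0 h2
    calc m x ≤ Real.log (((1 - c) * x + Real.exp 1)^2) := this
      _ = 2 * ℓ x := by
          rw [Real.log_pow]; push_cast; ring
  -- exponent tends to -infinity
  have hExp : Tendsto (fun x => C₁ * m x ^ a - C₁ - ℓ x ^ q) atTop atBot := by
    rw [tendsto_atBot]
    intro N
    have h2apos : (0:ℝ) < 2 ^ a := Real.rpow_pos_of_pos (by norm_num) a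
    have h1 : Tendsto (fun x : ℝ => x ^ (a - q)) atTop (nhds 0) := by
      have := tendsto_rpow_neg_atTop (y := q - a) (by linarith)
      simpa [neg_sub] using this
    have h1' : ∀ᶠ x in atTop, ℓ x ^ (a - q) < 1/(2 * C₁ * 2 ^ a) :=
      (h1.comp hℓ).eventually_lt_const (by positivity)
    have h2 : Tendsto (fun x => ℓ x ^ q) atTop atTop :=
      (tendsto_rpow_atTop hq0).comp hℓ
    filter_upwards [h1', h2.eventually_ge_atTop (-2*N), hℓ.eventually_ge_atTop 1, hm2ℓ,
      hm.eventually_ge_atTop 0] with x hx1 hx2 hx3 hx4 hx5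
    have hℓ0 : (0:ℝ) < ℓ x := by linarith
    have hq' : (0:ℝ) ≤ ℓ x ^ q := Real.rpow_nonneg hℓ0.le q
    have key : C₁ * m x ^ a ≤ (1/2) * ℓ x ^ q := by
      have hma : m x ^ a ≤ (2 * ℓ x) ^ a := Real.rpow_le_rpow hx5 hx4 ha0.le
      have h2a : (2 * ℓ x) ^ a = 2 ^ a * ℓ x ^ a := Real.mul_rpow (by norm_num) hℓ0.le
      have hsplit : ℓ x ^ a = ℓ x ^ (a - q) * ℓ x ^ q := by
        rw [← Real.rpow_add hℓ0]; congr 1; ring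
      have hstep : m x ^ a ≤ 2 ^ a * (ℓ x ^ (a - q) * ℓ x ^ q) := by
        rw [← hsplit]; rw [h2a] at hma; exact hma
      calc C₁ * m x ^ a ≤ C₁ * (2 ^ a * (ℓ x ^ (a - q) * ℓ x ^ q)) := by
            exact mul_le_mul_of_nonneg_left hstep hC₁.le
        _ ≤ C₁ * (2 ^ a * ((1/(2 * C₁ * 2 ^ a)) * ℓ x ^ q)) := by
            gcongr
        _ = (1/2) * ℓ x ^ q := by field_simp
    linarith
  -- the key pointwise identity
  have hEq : ∀ x : ℝ, 1 ≤ ℓ x → f' (finv (g ((1 - c) * x))) * h (f ((1 + c) * x))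
      = a * (C₂ + K) * ℓ x ^ (q * (a - 1)) * Real.exp (C₁ * m x ^ a - C₁ - ℓ x ^ q) := by
    intro x hx1
    have hℓ0 : (0:ℝ) ≤ ℓ x := by linarith
    rw [hg, hfinv, hf', hh, hf]
    rw [show Real.log ((1 - c) * x + Real.exp 1) = ℓ x from rfl,
        show Real.log ((1 + c) * x + Real.exp 1) = m x from rfl]
    rw [sub_add_cancel, sub_add_cancel, Real.log_exp]
    rw [← Real.rpow_mul hℓ0, mul_one_div, ← hq, ← Real.rpow_mul hℓ0]
    rw [show C₁ * (m x ^ a - 1) = C₁ * m x ^ a - C₁ by ring]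
    simp only [Real.exp_sub]
    field_simp
  -- squeeze
  have hG : Tendsto (fun x => a * (C₂ + K) * Real.exp (C₁ * m x ^ a - C₁ - ℓ x ^ q))
      atTop (nhds 0) := by
    have h0 := Real.tendsto_exp_atBot.comp hExp
    have := h0.const_mul (a * (C₂ + K))
    simpa using this
  apply squeeze_zero' ?_ ?_ hG
  · filter_upwards [hℓ.eventually_ge_atTop 1] with x hx1
    rw [hEq x hx1]
    have hℓ0 : (0:ℝ) ≤ ℓ x := by linarith
    have := Real.rpow_nonneg hℓ0 (q * (a - 1))
    positivity
  · filter_upwards [hℓ.eventually_ge_atTop 1] with x hx1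
    rw [hEq x hx1]
    have h1 : ℓ x ^ (q * (a - 1)) ≤ 1 :=
      Real.rpow_le_one_of_one_le_of_nonpos hx1 hqneg
    have h2 : (0:ℝ) < Real.exp (C₁ * m x ^ a - C₁ - ℓ x ^ q) := Real.exp_pos _
    nlinarith [mul_pos (mul_pos ha0 (by linarith : (0:ℝ) < C₂ + K)) h2,
      Real.rpow_nonneg (by linarith : (0:ℝ) ≤ ℓ x) (q * (a - 1))]
end

section
/- Drift decomposition bound: Suppose f : ℝ≥0 → ℝ≥0 is increasing, concave, differentiable with f' decreasing, and F(x) = ∫₀ˣ f(s)ds. If Q, Q' ∈ ℤ≥0^n satisfy Q'_i − Q_i = A_i − σ_i·1{Q_i > 0} with A_i, σ_i ∈ {0,1}, then ∑_i F(Q'_i) − ∑_i F(Q_i) ≤ A·f(Q) − σ·f(Q) + n·f'(0), where f(Q) denotes the vector (f(Q_i))_i. -/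
/-- Drift decomposition bound: for `f` nonnegative, increasing, concave, differentiable with `f'`
decreasing and `f 0 = 0`, `F(x) = ∫₀ˣ f`, and queue update `Q'_i = Q_i + A_i − σ_i·1{Q_i > 0}`
with `A_i, σ_i ∈ {0,1}`, we have
`∑ F(Q'_i) − ∑ F(Q_i) ≤ A·f(Q) − σ·f(Q) + n·f'(0)`. -/
theorem stmt10 (n : ℕ) (f : ℝ → ℝ)
    (hfnonneg : ∀ x ∈ Set.Ici (0:ℝ), 0 ≤ f x)
    (hfmono : MonotoneOn f (Set.Ici (0:ℝ)))
    (hfconc : ConcaveOn ℝ (Set.Ici (0:ℝ)) f)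
    (hfdiff : ∀ x ∈ Set.Ici (0:ℝ), DifferentiableAt ℝ f x)
    (hf'dec : AntitoneOn (deriv f) (Set.Ici (0:ℝ)))
    (hf0 : f 0 = 0)
    (A σ : Fin n → ℕ) (hA : ∀ i, A i ≤ 1) (hσ : ∀ i, σ i ≤ 1)
    (Q Q' : Fin n → ℕ)
    (hQ' : ∀ i, (Q' i : ℤ) = (Q i : ℤ) + (A i : ℤ) - (σ i : ℤ) * (if 0 < Q i then 1 else 0)) :
    (∑ i, ∫ s in (0:ℝ)..(Q' i : ℝ), f s) - (∑ i, ∫ s in (0:ℝ)..(Q i : ℝ), f s) ≤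
      (∑ i, (A i : ℝ) * f (Q i : ℝ)) - (∑ i, (σ i : ℝ) * f (Q i : ℝ)) + n * deriv f 0 := by
  set d0 := deriv f 0 with hd0
  have hcont : ContinuousOn f (Set.Ici (0:ℝ)) := fun x hx =>
    (hfdiff x hx).continuousAt.continuousWithinAt
  -- Lipschitz-type bound from the mean value theorem and antitone derivative
  have lip : ∀ a b : ℝ, 0 ≤ a → a ≤ b → f b - f a ≤ d0 * (b - a) := by
    intro a b ha hab
    rcases eq_or_lt_of_le hab with rfl | hab
    · simp
    · obtain ⟨c, hc, hderiv⟩ := exists_deriv_eq_slope f hab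
        (hcont.mono (fun x hx => le_trans ha hx.1))
        (fun x hx => (hfdiff x (le_trans ha hx.1.le)).differentiableWithinAt)
      have hcle : deriv f c ≤ d0 :=
        hf'dec Set.self_mem_Ici (le_trans ha hc.1.le) (le_trans ha hc.1.le)
      have hne : b - a ≠ 0 := by linarith
      have hfb : f b - f a = deriv f c * (b - a) := by
        rw [hderiv, div_mul_cancel₀ _ hne]
      rw [hfb]
      exact mul_le_mul_of_nonneg_right hcle (by linarith)
  have hd0nonneg : 0 ≤ d0 := by
    have h1 := lip 0 1 le_rfl zero_le_one
    have h2 := hfnonneg 1 (by norm_num)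
    rw [hf0] at h1; linarith
  -- pointwise bound
  have ptw : ∀ q x : ℝ, 0 ≤ q → 0 ≤ x → |x - q| ≤ 1 → |f x - f q| ≤ d0 := by
    intro q x hq hx h1
    rcases le_total q x with h | h
    · have := lip q x hq h
      have hm := hfmono hq hx h
      rw [abs_of_nonneg (by linarith)]
      have : d0 * (x - q) ≤ d0 * 1 := by
        apply mul_le_mul_of_nonneg_left _ hd0nonneg
        rw [abs_of_nonneg (by linarith)] at h1; linarith
      linarith
    · have := lip x q hx h
      have hm := hfmono hx hq h
      rw [abs_of_nonpos (by linarith)]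
      have : d0 * (q - x) ≤ d0 * 1 := by
        apply mul_le_mul_of_nonneg_left _ hd0nonneg
        rw [abs_of_nonpos (by linarith)] at h1; linarith
      linarith
  -- integrability
  have hint : ∀ a b : ℝ, 0 ≤ a → 0 ≤ b → IntervalIntegrable f MeasureTheory.volume a b := by
    intro a b ha hb
    apply ContinuousOn.intervalIntegrable
    apply hcont.mono
    intro x hx
    exact le_trans (le_min ha hb) hx.1
  -- key per-step integral bound
  have key : ∀ q q' : ℝ, 0 ≤ q → 0 ≤ q' → |q' - q| ≤ 1 →
      (∫ s in q..q', f s) ≤ (q' - q) * f q + d0 := by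
    intro q q' hq hq' h1
    have hiq : IntervalIntegrable f MeasureTheory.volume q q' := hint q q' hq hq'
    have hsplit : (∫ s in q..q', f s)
        = (∫ s in q..q', (f s - f q)) + (q' - q) * f q := by
      rw [intervalIntegral.integral_sub hiq intervalIntegrable_const,
        intervalIntegral.integral_const, smul_eq_mul]
      ring
    have hbound : ‖∫ s in q..q', (f s - f q)‖ ≤ d0 * |q' - q| := by
      apply intervalIntegral.norm_integral_le_of_norm_le_const
      intro x hx
      have hxmem : x ∈ Set.Icc (min q q') (max q q') := ⟨hx.1.le, hx.2⟩
      have hx0 : 0 ≤ x := le_trans (le_min hq hq') hxmem.1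
      have hxq : |x - q| ≤ 1 := by
        have h2 : |x - q| ≤ max q q' - min q q' := by
          rw [abs_sub_le_iff]
          constructor
          · have := min_le_left q q'; linarith [hxmem.2]
          · have := le_max_left q q'; linarith [hxmem.1]
        have h3 : max q q' - min q q' = |q' - q| := by
          exact max_sub_min_eq_abs q q'
        linarith
      exact ptw q x hq hx0 hxq
    have habs : (∫ s in q..q', (f s - f q)) ≤ d0 := by
      have := le_trans (le_abs_self _) hbound
      calc (∫ s in q..q', (f s - f q)) ≤ d0 * |q' - q| := this
        _ ≤ d0 * 1 := mul_le_mul_of_nonneg_left h1 hd0nonneg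
        _ = d0 := mul_one d0
    linarith [hsplit, habs]
  -- per-index bound
  have per : ∀ i, (∫ s in (0:ℝ)..(Q' i : ℝ), f s) - (∫ s in (0:ℝ)..(Q i : ℝ), f s) ≤
      ((A i : ℝ) * f (Q i : ℝ) - (σ i : ℝ) * f (Q i : ℝ)) + d0 := by
    intro i
    have hdiff : (∫ s in (0:ℝ)..(Q' i : ℝ), f s) - (∫ s in (0:ℝ)..(Q i : ℝ), f s)
        = ∫ s in (Q i : ℝ)..(Q' i : ℝ), f s := by
      rw [intervalIntegral.integral_interval_sub_left
        (hint 0 (Q' i : ℝ) le_rfl (Nat.cast_nonneg _))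
        (hint 0 (Q i : ℝ) le_rfl (Nat.cast_nonneg _))]
    have hAi := hA i
    have hσi := hσ i
    have hQi := hQ' i
    have hdelta : |((Q' i : ℝ)) - (Q i : ℝ)| ≤ 1 := by
      have : |((Q' i : ℤ)) - (Q i : ℤ)| ≤ 1 := by
        rw [abs_le, hQi]
        split_ifs with h <;> omega
      calc |((Q' i : ℝ)) - (Q i : ℝ)| = |(((Q' i : ℤ) - (Q i : ℤ) : ℤ) : ℝ)| := by push_cast; ring_nf
        _ = ((|((Q' i : ℤ)) - (Q i : ℤ)| : ℤ) : ℝ) := by rw [Int.cast_abs]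
        _ ≤ 1 := by exact_mod_cast this
    have hk := key (Q i : ℝ) (Q' i : ℝ) (Nat.cast_nonneg _) (Nat.cast_nonneg _) hdelta
    have hprod : ((Q' i : ℝ) - (Q i : ℝ)) * f (Q i : ℝ)
        = (A i : ℝ) * f (Q i : ℝ) - (σ i : ℝ) * f (Q i : ℝ) := by
      by_cases h : 0 < Q i
      · have : ((Q' i : ℝ)) - (Q i : ℝ) = (A i : ℝ) - (σ i : ℝ) := by
          have h2 := hQi; rw [if_pos h] at h2
          have h3 : ((Q' i : ℤ)) - (Q i : ℤ) = (A i : ℤ) - (σ i : ℤ) := by omega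
          exact_mod_cast h3
        rw [this]; ring
      · have hq0 : Q i = 0 := by omega
        have hf : f (Q i : ℝ) = 0 := by rw [hq0]; simpa using hf0
        rw [hf]; ring
    rw [hdiff, ← hprod]
    exact hk
  -- sum up
  rw [← Finset.sum_sub_distrib]
  have hsum := Finset.sum_le_sum (fun i (_ : i ∈ Finset.univ) => per i)
  calc (∑ i, ((∫ s in (0:ℝ)..(Q' i : ℝ), f s) - ∫ s in (0:ℝ)..(Q i : ℝ), f s))
      ≤ ∑ i, (((A i : ℝ) * f (Q i : ℝ) - (σ i : ℝ) * f (Q i : ℝ)) + d0) := hsum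
    _ = (∑ i, (A i : ℝ) * f (Q i : ℝ)) - (∑ i, (σ i : ℝ) * f (Q i : ℝ)) + n * d0 := by
        rw [Finset.sum_add_distrib, Finset.sum_sub_distrib, Finset.sum_const,
          Finset.card_univ, Fintype.card_fin, nsmul_eq_mul]
end
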